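/- (Vanishing of UI characterizes the Blackwell order.) Let 𝒮, 𝒳₁, 𝒳₂ be finite sets and let P be a probability distribution on 𝒮 × 𝒳₁ × 𝒳₂ whose marginal on 𝒮 has full support. Let Δ_P denote the set of probability distributions Q on 𝒮 × 𝒳₁ × 𝒳₂ whose pair marginals on 𝒮 × 𝒳₁ and on 𝒮 × 𝒳₂ agree with those of P, and define UI(S;X₁∖X₂) := min over Q ∈ Δ_P of the conditional mutual information I_Q(S;X₁|X₂). Then UI(S;X₁∖X₂) = 0 if and only if the channel (X₁←S) with entries P(X₁=x₁|S=s) is a garbling of the channel (X₂←S) with entries P(X₂=x₂|S=s). -/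
import Mathlib


open Finset

/-- A probability distribution on a finite set. -/
def IsDist {S : Type} [Fintype S] (p : S → ℝ) : Prop :=
  (∀ s, 0 ≤ p s) ∧ ∑ s, p s = 1

/-- A channel from `S` to `X`: a column-stochastic matrix. -/
def IsChannel {S X : Type} [Fintype S] [Fintype X] (κ : X → S → ℝ) : Prop :=
  (∀ x s, 0 ≤ κ x s) ∧ ∀ s, ∑ x, κ x s = 1

/-- `κ₁` is a garbling of `κ₂` (the Blackwell order `κ₁ ⪯ κ₂`). -/
def IsGarbling {S X₁ X₂ : Type} [Fintype S] [Fintype X₁] [Fintype X₂]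
    (κ₁ : X₁ → S → ℝ) (κ₂ : X₂ → S → ℝ) : Prop :=
  ∃ lam : X₁ → X₂ → ℝ, IsChannel lam ∧ ∀ x₁ s, κ₁ x₁ s = ∑ x₂, lam x₁ x₂ * κ₂ x₂ s

/-- Optimal expected utility: maximum over decision rules `d : X → A`. -/
noncomputable def optUtility {S X A : Type} [Fintype S] [Fintype X] [Fintype A]
    (p : S → ℝ) (u : A × S → ℝ) (κ : X → S → ℝ) : ℝ :=
  ⨆ d : X → A, ∑ s, ∑ x, p s * κ x s * u (d x, s)

/-- Mutual information between input (with distribution `p`) and output of channel `κ`;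
terms with `κ x s = 0` are taken to be `0`. -/
noncomputable def mutualInfo {S X : Type} [Fintype S] [Fintype X]
    (p : S → ℝ) (κ : X → S → ℝ) : ℝ :=
  ∑ s, ∑ x, if κ x s = 0 then 0 else
    p s * κ x s * Real.log (κ x s / ∑ s', p s' * κ x s')

/-- Channel composition: `(κ·λ) x s = ∑ t, κ x t * λ t s`. -/
def chanComp {S T X : Type} [Fintype S] [Fintype T] [Fintype X]
    (κ : X → T → ℝ) (lam : T → S → ℝ) : X → S → ℝ :=
  fun x s => ∑ t, κ x t * lam t s

/-- Marginal on `S` of a joint distribution on `S × X₁ × X₂`. -/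
noncomputable def margS3 {S X₁ X₂ : Type} [Fintype S] [Fintype X₁] [Fintype X₂]
    (P : S × X₁ × X₂ → ℝ) (s : S) : ℝ := ∑ x₁, ∑ x₂, P (s, x₁, x₂)

/-- The channel `X₁ ← S` of conditional probabilities `P(X₁ = x₁ | S = s)`. -/
noncomputable def chan1of3 {S X₁ X₂ : Type} [Fintype S] [Fintype X₁] [Fintype X₂]
    (P : S × X₁ × X₂ → ℝ) (x₁ : X₁) (s : S) : ℝ :=
  (∑ x₂, P (s, x₁, x₂)) / margS3 P s

/-- The channel `X₂ ← S` of conditional probabilities `P(X₂ = x₂ | S = s)`. -/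
noncomputable def chan2of3 {S X₁ X₂ : Type} [Fintype S] [Fintype X₁] [Fintype X₂]
    (P : S × X₁ × X₂ → ℝ) (x₂ : X₂) (s : S) : ℝ :=
  (∑ x₁, P (s, x₁, x₂)) / margS3 P s

/-- Pushforward of a joint distribution on `S × X₁ × X₂` along `f : S → S'`. -/
noncomputable def push3 {S S' X₁ X₂ : Type} [Fintype S] [Fintype X₁] [Fintype X₂]
    [DecidableEq S'] (f : S → S') (P : S × X₁ × X₂ → ℝ) : S' × X₁ × X₂ → ℝ :=
  fun q => ∑ s ∈ Finset.univ.filter (fun s => f s = q.1), P (s, q.2.1, q.2.2)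

/-- Conditional mutual information `I_Q(S; X₁ | X₂)` of a joint distribution `Q` on
`S × X₁ × X₂`; terms with `Q(s,x₁,x₂) = 0` are taken to be `0`. -/
noncomputable def condMI {S X₁ X₂ : Type} [Fintype S] [Fintype X₁] [Fintype X₂]
    (Q : S × X₁ × X₂ → ℝ) : ℝ :=
  ∑ s, ∑ x₁, ∑ x₂,
    if Q (s, x₁, x₂) = 0 then 0 else
      Q (s, x₁, x₂) *
        Real.log (Q (s, x₁, x₂) * (∑ s', ∑ x₁', Q (s', x₁', x₂)) /
          ((∑ x₁', Q (s, x₁', x₂)) * (∑ s', Q (s', x₁, x₂))))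

/-- The optimization domain `Δ_P`: joint distributions `Q` on `S × X₁ × X₂` whose pair
marginals on `S × X₁` and on `S × X₂` agree with those of `P`. -/
def memDeltaP {S X₁ X₂ : Type} [Fintype S] [Fintype X₁] [Fintype X₂]
    (P Q : S × X₁ × X₂ → ℝ) : Prop :=
  (∀ q, 0 ≤ Q q) ∧ (∑ q, Q q = 1) ∧
  (∀ s x₁, ∑ x₂, Q (s, x₁, x₂) = ∑ x₂, P (s, x₁, x₂)) ∧
  (∀ s x₂, ∑ x₁, Q (s, x₁, x₂) = ∑ x₁, P (s, x₁, x₂))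

/-- The unique information `UI(S; X₁ ∖ X₂) = min_{Q ∈ Δ_P} I_Q(S; X₁ | X₂)`. -/
noncomputable def UI {S X₁ X₂ : Type} [Fintype S] [Fintype X₁] [Fintype X₂]
    (P : S × X₁ × X₂ → ℝ) : ℝ :=
  sInf (condMI '' {Q | memDeltaP P Q})


section UIHelpers

variable {S X₁ X₂ : Type} [Fintype S] [Fintype X₁] [Fintype X₂]

/-- Marginal on `X₂`. -/
noncomputable def mA (Q : S × X₁ × X₂ → ℝ) (x₂ : X₂) : ℝ := ∑ s, ∑ x₁, Q (s, x₁, x₂)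
/-- Marginal on `S × X₂`. -/
noncomputable def mB (Q : S × X₁ × X₂ → ℝ) (s : S) (x₂ : X₂) : ℝ := ∑ x₁, Q (s, x₁, x₂)
/-- Marginal on `X₁ × X₂`. -/
noncomputable def mC (Q : S × X₁ × X₂ → ℝ) (x₁ : X₁) (x₂ : X₂) : ℝ := ∑ s, Q (s, x₁, x₂)

lemma sum3 (f : S × X₁ × X₂ → ℝ) : ∑ q, f q = ∑ s, ∑ x₁, ∑ x₂, f (s, x₁, x₂) := by
  rw [Fintype.sum_prod_type]
  exact Finset.sum_congr rfl fun s _ => Fintype.sum_prod_type _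

lemma sum3' (f : S × X₁ × X₂ → ℝ) : ∑ q, f q = ∑ x₂, ∑ s, ∑ x₁, f (s, x₁, x₂) := by
  rw [sum3]
  rw [show (∑ s, ∑ x₁, ∑ x₂, f (s, x₁, x₂)) = ∑ s, ∑ x₂, ∑ x₁, f (s, x₁, x₂) from
    Finset.sum_congr rfl fun s _ => Finset.sum_comm]
  exact Finset.sum_comm

variable {Q : S × X₁ × X₂ → ℝ}

lemma mB_nonneg (hQ : ∀ q, 0 ≤ Q q) {s : S} {x₂ : X₂} : 0 ≤ mB Q s x₂ :=
  Finset.sum_nonneg fun _ _ => hQ _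

lemma mC_nonneg (hQ : ∀ q, 0 ≤ Q q) {x₁ : X₁} {x₂ : X₂} : 0 ≤ mC Q x₁ x₂ :=
  Finset.sum_nonneg fun _ _ => hQ _

lemma mA_nonneg (hQ : ∀ q, 0 ≤ Q q) {x₂ : X₂} : 0 ≤ mA Q x₂ :=
  Finset.sum_nonneg fun _ _ => mB_nonneg hQ

lemma le_mB (hQ : ∀ q, 0 ≤ Q q) {s : S} {x₁ : X₁} {x₂ : X₂} :
    Q (s, x₁, x₂) ≤ mB Q s x₂ :=
  Finset.single_le_sum (f := fun x₁' => Q (s, x₁', x₂)) (fun _ _ => hQ _) (Finset.mem_univ x₁)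

lemma le_mC (hQ : ∀ q, 0 ≤ Q q) {s : S} {x₁ : X₁} {x₂ : X₂} :
    Q (s, x₁, x₂) ≤ mC Q x₁ x₂ :=
  Finset.single_le_sum (f := fun s' => Q (s', x₁, x₂)) (fun _ _ => hQ _) (Finset.mem_univ s)

lemma mB_le_mA (hQ : ∀ q, 0 ≤ Q q) {s : S} {x₂ : X₂} : mB Q s x₂ ≤ mA Q x₂ :=
  Finset.single_le_sum (f := fun s' => mB Q s' x₂) (fun _ _ => mB_nonneg hQ) (Finset.mem_univ s)

lemma mA_eq_sum_mC (Q : S × X₁ × X₂ → ℝ) (x₂ : X₂) : mA Q x₂ = ∑ x₁, mC Q x₁ x₂ :=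
  Finset.sum_comm

lemma sub_le_mul_log_div {a b : ℝ} (ha : 0 < a) (hb : 0 < b) :
    a - b ≤ a * Real.log (a / b) := by
  have h := Real.log_le_sub_one_of_pos (div_pos hb ha)
  have hba : a * (b / a) = b := by field_simp
  rw [Real.log_div hb.ne' ha.ne'] at h
  rw [Real.log_div ha.ne' hb.ne']
  nlinarith [mul_le_mul_of_nonneg_left h ha.le]

lemma eq_of_mul_log_div {a b : ℝ} (ha : 0 < a) (hb : 0 < b)
    (h : a * Real.log (a / b) = a - b) : a = b := by
  by_contra hne
  have h1 : b / a ≠ 1 := by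
    intro hx
    apply hne
    field_simp at hx
    linarith
  have h2 := Real.log_lt_sub_one_of_pos (div_pos hb ha) h1
  have hba : a * (b / a) = b := by field_simp
  rw [Real.log_div hb.ne' ha.ne'] at h2
  rw [Real.log_div ha.ne' hb.ne'] at h
  nlinarith [mul_lt_mul_of_pos_left h2 ha]

/-- Key lemma: nonnegativity of `condMI` and its equality case (conditional independence). -/
theorem condMI_nonneg_and (Q : S × X₁ × X₂ → ℝ) (hQ : ∀ q, 0 ≤ Q q) (hsum : ∑ q, Q q = 1) :
    0 ≤ condMI Q ∧ (condMI Q = 0 →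
      ∀ s x₁ x₂, Q (s, x₁, x₂) * mA Q x₂ = mB Q s x₂ * mC Q x₁ x₂) := by
  classical
  set t : S × X₁ × X₂ → ℝ := fun q =>
    if Q q = 0 then 0 else
      Q q * Real.log (Q q * mA Q q.2.2 / (mB Q q.1 q.2.2 * mC Q q.2.1 q.2.2)) with tdef
  set u : S × X₁ × X₂ → ℝ := fun q =>
    if Q q = 0 then 0 else Q q - mB Q q.1 q.2.2 * mC Q q.2.1 q.2.2 / mA Q q.2.2 with udef
  set v : S × X₁ × X₂ → ℝ := fun q =>
    if Q q = 0 then 0 else mB Q q.1 q.2.2 * mC Q q.2.1 q.2.2 / mA Q q.2.2 with vdef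
  set w : S × X₁ × X₂ → ℝ := fun q =>
    if mA Q q.2.2 = 0 then 0 else mB Q q.1 q.2.2 * mC Q q.2.1 q.2.2 / mA Q q.2.2 with wdef
  have hcond : condMI Q = ∑ q, t q := (sum3 t).symm
  have htu : ∀ q, u q ≤ t q := by
    rintro ⟨s, x₁, x₂⟩
    by_cases hq : Q (s, x₁, x₂) = 0
    · simp [tdef, udef, hq]
    · have ha : 0 < Q (s, x₁, x₂) := (hQ _).lt_of_ne (Ne.symm hq)
      have hB : 0 < mB Q s x₂ := ha.trans_le (le_mB hQ)
      have hC : 0 < mC Q x₁ x₂ := ha.trans_le (le_mC hQ)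
      have hA : 0 < mA Q x₂ := hB.trans_le (mB_le_mA hQ)
      have hb : 0 < mB Q s x₂ * mC Q x₁ x₂ / mA Q x₂ := by positivity
      have harg : Q (s, x₁, x₂) / (mB Q s x₂ * mC Q x₁ x₂ / mA Q x₂)
          = Q (s, x₁, x₂) * mA Q x₂ / (mB Q s x₂ * mC Q x₁ x₂) := div_div_eq_mul_div _ _ _
      simp only [tdef, udef, if_neg hq]
      rw [← harg]
      exact sub_le_mul_log_div ha hb
  have hvw : ∀ q, v q ≤ w q := by
    rintro ⟨s, x₁, x₂⟩
    by_cases hq : Q (s, x₁, x₂) = 0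
    · simp only [vdef, wdef, if_pos hq]
      split
      · exact le_refl 0
      · exact div_nonneg (mul_nonneg (mB_nonneg hQ) (mC_nonneg hQ)) (mA_nonneg hQ)
    · have ha : 0 < Q (s, x₁, x₂) := (hQ _).lt_of_ne (Ne.symm hq)
      have hA : 0 < mA Q x₂ := lt_of_lt_of_le ha ((le_mB hQ).trans (mB_le_mA hQ))
      simp only [vdef, wdef, if_neg hq, if_neg hA.ne']
      exact le_refl _
  have huQv : ∀ q, u q = Q q - v q := by
    intro q
    by_cases hq : Q q = 0
    · simp [udef, vdef, hq]
    · simp [udef, vdef, hq]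
  have hsumu : ∑ q, u q = 1 - ∑ q, v q := by
    rw [Finset.sum_congr rfl fun q _ => huQv q, Finset.sum_sub_distrib, hsum]
  have hsumA : ∑ x₂, mA Q x₂ = 1 := by
    rw [← hsum, sum3' Q]
    rfl
  have hsumw_eq : ∑ q, w q = ∑ x₂, (if mA Q x₂ = 0 then 0 else mA Q x₂) := by
    rw [sum3' w]
    refine Finset.sum_congr rfl fun x₂ _ => ?_
    by_cases hA : mA Q x₂ = 0
    · simp [wdef, hA]
    · simp only [wdef, if_neg hA]
      have inner : ∀ s, ∑ x₁, mB Q s x₂ * mC Q x₁ x₂ / mA Q x₂ = mB Q s x₂ := by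
        intro s
        rw [← Finset.sum_div, ← Finset.mul_sum, ← mA_eq_sum_mC, mul_div_assoc,
          div_self hA, mul_one]
      rw [Finset.sum_congr rfl fun s _ => inner s]
      rfl
  have hsumw_le : ∑ q, w q ≤ 1 := by
    rw [hsumw_eq, ← hsumA]
    refine Finset.sum_le_sum fun x₂ _ => ?_
    split
    · exact mA_nonneg hQ
    · exact le_refl _
  have hsumv_le : ∑ q, v q ≤ ∑ q, w q := Finset.sum_le_sum fun q _ => hvw q
  have h0u : 0 ≤ ∑ q, u q := by rw [hsumu]; linarith
  have hnn : 0 ≤ condMI Q := by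
    rw [hcond]
    exact h0u.trans (Finset.sum_le_sum fun q _ => htu q)
  refine ⟨hnn, fun hzero s x₁ x₂ => ?_⟩
  have htsum : ∑ q, t q = 0 := by rw [← hcond]; exact hzero
  have hueq : ∑ q, u q = 0 :=
    le_antisymm (htsum ▸ Finset.sum_le_sum fun q _ => htu q) h0u
  have hveq1 : ∑ q, v q = 1 := by rw [hsumu] at hueq; linarith
  have hvw_sum : ∑ q, v q = ∑ q, w q :=
    le_antisymm hsumv_le (by rw [hveq1]; exact hsumw_le)
  have hvw_eq : ∀ q : S × X₁ × X₂, v q = w q := fun q =>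
    (Finset.sum_eq_sum_iff_of_le (fun q _ => hvw q)).mp hvw_sum q (Finset.mem_univ q)
  have htu_sum : ∑ q, u q = ∑ q, t q := by rw [hueq, htsum]
  have htu_eq : ∀ q : S × X₁ × X₂, u q = t q := fun q =>
    (Finset.sum_eq_sum_iff_of_le (fun q _ => htu q)).mp htu_sum q (Finset.mem_univ q)
  by_cases hq : Q (s, x₁, x₂) = 0
  · by_cases hA : mA Q x₂ = 0
    · have hB0 : mB Q s x₂ = 0 := le_antisymm (hA ▸ mB_le_mA hQ) (mB_nonneg hQ)
      rw [hq, hB0]; ring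
    · have hvwq := hvw_eq (s, x₁, x₂)
      simp only [vdef, wdef, if_pos hq, if_neg hA] at hvwq
      have hBC : mB Q s x₂ * mC Q x₁ x₂ = 0 := by
        rcases div_eq_zero_iff.mp hvwq.symm with h | h
        · exact h
        · exact absurd h hA
      rw [hq, hBC]; ring
  · have ha : 0 < Q (s, x₁, x₂) := (hQ _).lt_of_ne (Ne.symm hq)
    have hB : 0 < mB Q s x₂ := ha.trans_le (le_mB hQ)
    have hC : 0 < mC Q x₁ x₂ := ha.trans_le (le_mC hQ)
    have hA : 0 < mA Q x₂ := hB.trans_le (mB_le_mA hQ)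
    have hb : 0 < mB Q s x₂ * mC Q x₁ x₂ / mA Q x₂ := by positivity
    have harg : Q (s, x₁, x₂) / (mB Q s x₂ * mC Q x₁ x₂ / mA Q x₂)
        = Q (s, x₁, x₂) * mA Q x₂ / (mB Q s x₂ * mC Q x₁ x₂) := div_div_eq_mul_div _ _ _
    have htuq := htu_eq (s, x₁, x₂)
    simp only [tdef, udef, if_neg hq] at htuq
    rw [← harg] at htuq
    have heq := eq_of_mul_log_div ha hb htuq.symm
    rw [heq, div_mul_cancel₀ _ hA.ne']

/-- `condMI` vanishes under conditional independence. -/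
theorem condMI_of_indep (Q : S × X₁ × X₂ → ℝ) (hQ : ∀ q, 0 ≤ Q q)
    (h : ∀ s x₁ x₂, Q (s, x₁, x₂) * mA Q x₂ = mB Q s x₂ * mC Q x₁ x₂) :
    condMI Q = 0 := by
  rw [condMI]
  refine Finset.sum_eq_zero fun s _ => Finset.sum_eq_zero fun x₁ _ =>
    Finset.sum_eq_zero fun x₂ _ => ?_
  by_cases hq : Q (s, x₁, x₂) = 0
  · simp [hq]
  · have ha : 0 < Q (s, x₁, x₂) := (hQ _).lt_of_ne (Ne.symm hq)
    have hB : 0 < mB Q s x₂ := ha.trans_le (le_mB hQ)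
    have hC : 0 < mC Q x₁ x₂ := ha.trans_le (le_mC hQ)
    show (if Q (s, x₁, x₂) = 0 then (0:ℝ) else
      Q (s, x₁, x₂) * Real.log (Q (s, x₁, x₂) * mA Q x₂ / (mB Q s x₂ * mC Q x₁ x₂))) = 0
    rw [if_neg hq, h s x₁ x₂, div_self (by positivity), Real.log_one, mul_zero]

/-- Continuous version of `condMI` (equal to it on nonnegative `Q`). -/
noncomputable def gFun (Q : S × X₁ × X₂ → ℝ) : ℝ :=
  (∑ q, Q q * Real.log (Q q)) + (∑ x₂, mA Q x₂ * Real.log (mA Q x₂))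
    - (∑ s, ∑ x₂, mB Q s x₂ * Real.log (mB Q s x₂))
    - (∑ x₁, ∑ x₂, mC Q x₁ x₂ * Real.log (mC Q x₁ x₂))

theorem condMI_eq_gFun (Q : S × X₁ × X₂ → ℝ) (hQ : ∀ q, 0 ≤ Q q) :
    condMI Q = gFun Q := by
  have hpt : ∀ s x₁ x₂,
      (if Q (s, x₁, x₂) = 0 then (0:ℝ) else
        Q (s, x₁, x₂) * Real.log (Q (s, x₁, x₂) * mA Q x₂ / (mB Q s x₂ * mC Q x₁ x₂)))
      = Q (s, x₁, x₂) * Real.log (Q (s, x₁, x₂)) + Q (s, x₁, x₂) * Real.log (mA Q x₂)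
        - Q (s, x₁, x₂) * Real.log (mB Q s x₂) - Q (s, x₁, x₂) * Real.log (mC Q x₁ x₂) := by
    intro s x₁ x₂
    by_cases hq : Q (s, x₁, x₂) = 0
    · simp [hq]
    · have ha : 0 < Q (s, x₁, x₂) := (hQ _).lt_of_ne (Ne.symm hq)
      have hB : 0 < mB Q s x₂ := ha.trans_le (le_mB hQ)
      have hC : 0 < mC Q x₁ x₂ := ha.trans_le (le_mC hQ)
      have hA : 0 < mA Q x₂ := hB.trans_le (mB_le_mA hQ)
      rw [if_neg hq, Real.log_div (mul_ne_zero hq hA.ne') (mul_ne_zero hB.ne' hC.ne'),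
        Real.log_mul hq hA.ne', Real.log_mul hB.ne' hC.ne']
      ring
  have h0 : condMI Q = ∑ s, ∑ x₁, ∑ x₂,
      (Q (s, x₁, x₂) * Real.log (Q (s, x₁, x₂)) + Q (s, x₁, x₂) * Real.log (mA Q x₂)
        - Q (s, x₁, x₂) * Real.log (mB Q s x₂) - Q (s, x₁, x₂) * Real.log (mC Q x₁ x₂)) := by
    rw [show condMI Q = ∑ s, ∑ x₁, ∑ x₂,
      (if Q (s, x₁, x₂) = 0 then (0:ℝ) else
        Q (s, x₁, x₂) * Real.log (Q (s, x₁, x₂) * mA Q x₂ / (mB Q s x₂ * mC Q x₁ x₂))) from rfl]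
    exact Finset.sum_congr rfl fun s _ => Finset.sum_congr rfl fun x₁ _ =>
      Finset.sum_congr rfl fun x₂ _ => hpt s x₁ x₂
  have e1 : ∑ s, ∑ x₁, ∑ x₂, Q (s, x₁, x₂) * Real.log (Q (s, x₁, x₂))
      = ∑ q, Q q * Real.log (Q q) := (sum3 fun q => Q q * Real.log (Q q)).symm
  have e2 : ∑ s, ∑ x₁, ∑ x₂, Q (s, x₁, x₂) * Real.log (mA Q x₂)
      = ∑ x₂, mA Q x₂ * Real.log (mA Q x₂) := by
    rw [← sum3 fun q => Q q * Real.log (mA Q q.2.2),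
      sum3' fun q => Q q * Real.log (mA Q q.2.2)]
    refine Finset.sum_congr rfl fun x₂ _ => ?_
    calc ∑ s, ∑ x₁, Q (s, x₁, x₂) * Real.log (mA Q x₂)
        = ∑ s, (∑ x₁, Q (s, x₁, x₂)) * Real.log (mA Q x₂) :=
          Finset.sum_congr rfl fun s _ => (Finset.sum_mul _ _ _).symm
      _ = (∑ s, ∑ x₁, Q (s, x₁, x₂)) * Real.log (mA Q x₂) := (Finset.sum_mul _ _ _).symm
  have e3 : ∑ s, ∑ x₁, ∑ x₂, Q (s, x₁, x₂) * Real.log (mB Q s x₂)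
      = ∑ s, ∑ x₂, mB Q s x₂ * Real.log (mB Q s x₂) := by
    refine Finset.sum_congr rfl fun s _ => ?_
    rw [Finset.sum_comm]
    refine Finset.sum_congr rfl fun x₂ _ => (Finset.sum_mul _ _ _).symm
  have e4 : ∑ s, ∑ x₁, ∑ x₂, Q (s, x₁, x₂) * Real.log (mC Q x₁ x₂)
      = ∑ x₁, ∑ x₂, mC Q x₁ x₂ * Real.log (mC Q x₁ x₂) := by
    rw [Finset.sum_comm]
    refine Finset.sum_congr rfl fun x₁ _ => ?_
    rw [Finset.sum_comm]
    refine Finset.sum_congr rfl fun x₂ _ => (Finset.sum_mul _ _ _).symm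
  rw [h0]
  simp only [Finset.sum_add_distrib, Finset.sum_sub_distrib]
  rw [e1, e2, e3, e4, gFun]

theorem continuous_gFun : Continuous (gFun (S := S) (X₁ := X₁) (X₂ := X₂)) := by
  have hphi : Continuous fun x : ℝ => x * Real.log x := Real.continuous_mul_log
  have hA : ∀ x₂ : X₂, Continuous fun Q : S × X₁ × X₂ → ℝ => mA Q x₂ := fun x₂ =>
    continuous_finset_sum _ fun s _ => continuous_finset_sum _ fun x₁ _ => continuous_apply _
  have hB : ∀ (s : S) (x₂ : X₂), Continuous fun Q : S × X₁ × X₂ → ℝ => mB Q s x₂ :=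
    fun s x₂ => continuous_finset_sum _ fun x₁ _ => continuous_apply _
  have hC : ∀ (x₁ : X₁) (x₂ : X₂), Continuous fun Q : S × X₁ × X₂ → ℝ => mC Q x₁ x₂ :=
    fun x₁ x₂ => continuous_finset_sum _ fun s _ => continuous_apply _
  refine Continuous.sub (Continuous.sub (Continuous.add ?_ ?_) ?_) ?_
  · exact continuous_finset_sum _ fun q _ => hphi.comp (continuous_apply q)
  · exact continuous_finset_sum _ fun x₂ _ => hphi.comp (hA x₂)
  · exact continuous_finset_sum _ fun s _ =>
      continuous_finset_sum _ fun x₂ _ => hphi.comp (hB s x₂)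
  · exact continuous_finset_sum _ fun x₁ _ =>
      continuous_finset_sum _ fun x₂ _ => hphi.comp (hC x₁ x₂)

theorem isCompact_delta (P : S × X₁ × X₂ → ℝ) :
    IsCompact {Q : S × X₁ × X₂ → ℝ | memDeltaP P Q} := by
  have hclosed : IsClosed {Q : S × X₁ × X₂ → ℝ | memDeltaP P Q} := by
    have hset : {Q : S × X₁ × X₂ → ℝ | memDeltaP P Q} =
        (⋂ q, {Q : S × X₁ × X₂ → ℝ | 0 ≤ Q q}) ∩
        {Q : S × X₁ × X₂ → ℝ | ∑ q, Q q = 1} ∩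
        (⋂ s, ⋂ x₁, {Q : S × X₁ × X₂ → ℝ | ∑ x₂, Q (s, x₁, x₂) = ∑ x₂, P (s, x₁, x₂)}) ∩
        (⋂ s, ⋂ x₂, {Q : S × X₁ × X₂ → ℝ | ∑ x₁, Q (s, x₁, x₂) = ∑ x₁, P (s, x₁, x₂)}) := by
      ext Q
      simp only [memDeltaP, Set.mem_setOf_eq, Set.mem_inter_iff, Set.mem_iInter]
      tauto
    rw [hset]
    refine IsClosed.inter (IsClosed.inter (IsClosed.inter ?_ ?_) ?_) ?_
    · exact isClosed_iInter fun q => isClosed_le continuous_const (continuous_apply q)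
    · exact isClosed_eq (continuous_finset_sum _ fun q _ => continuous_apply q) continuous_const
    · exact isClosed_iInter fun s => isClosed_iInter fun x₁ =>
        isClosed_eq (continuous_finset_sum _ fun x₂ _ => continuous_apply _) continuous_const
    · exact isClosed_iInter fun s => isClosed_iInter fun x₂ =>
        isClosed_eq (continuous_finset_sum _ fun x₁ _ => continuous_apply _) continuous_const
  have hbdd : Bornology.IsBounded {Q : S × X₁ × X₂ → ℝ | memDeltaP P Q} := by
    refine (Metric.isBounded_closedBall (x := (0 : S × X₁ × X₂ → ℝ)) (r := 1)).subset ?_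
    intro Q hQ
    rw [Metric.mem_closedBall, dist_pi_le_iff (by norm_num)]
    intro q
    have h0 := hQ.1 q
    have h1 : Q q ≤ 1 := by
      have := Finset.single_le_sum (f := Q) (fun i _ => hQ.1 i) (Finset.mem_univ q)
      rw [hQ.2.1] at this
      exact this
    simp only [Pi.zero_apply, Real.dist_eq, sub_zero]
    rw [abs_le]
    constructor <;> linarith
  exact Metric.isCompact_of_isClosed_isBounded hclosed hbdd

end UIHelpers

/-- Vanishing of `UI` characterizes the Blackwell order: for a joint
distribution `P` of `(S, X₁, X₂)` whose marginal on `S` has full support,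
`UI(S; X₁ ∖ X₂) = 0` if and only if `(X₁ ← S) ⪯ (X₂ ← S)`. -/
theorem UI_eq_zero_iff_garbling {S X₁ X₂ : Type} [Fintype S] [Fintype X₁] [Fintype X₂]
    (P : S × X₁ × X₂ → ℝ)
    (hP : (∀ q, 0 ≤ P q) ∧ ∑ q, P q = 1)
    (hfull : ∀ s, 0 < margS3 P s) :
    UI P = 0 ↔ IsGarbling (chan1of3 P) (chan2of3 P) := by
  classical
  obtain ⟨hPnn, hPsum⟩ := hP
  have hPmem : memDeltaP P P := ⟨hPnn, hPsum, fun _ _ => rfl, fun _ _ => rfl⟩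
  have hDne : {Q : S × X₁ × X₂ → ℝ | memDeltaP P Q}.Nonempty := ⟨P, hPmem⟩
  have hlb : ∀ y ∈ condMI '' {Q : S × X₁ × X₂ → ℝ | memDeltaP P Q}, (0:ℝ) ≤ y := by
    rintro y ⟨Q, hQ, rfl⟩
    exact (condMI_nonneg_and Q hQ.1 hQ.2.1).1
  have hUIdef : UI P = sInf (condMI '' {Q : S × X₁ × X₂ → ℝ | memDeltaP P Q}) := rfl
  constructor
  · intro hUI
    obtain ⟨Qm, hQm, hmin⟩ := (isCompact_delta P).exists_isMinOn hDne
      continuous_gFun.continuousOn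
    have hmin' : ∀ Q ∈ {Q : S × X₁ × X₂ → ℝ | memDeltaP P Q}, condMI Qm ≤ condMI Q := by
      intro Q hQ
      rw [condMI_eq_gFun Qm hQm.1, condMI_eq_gFun Q hQ.1]
      exact hmin hQ
    have hQmval : condMI Qm = 0 := by
      have hle : condMI Qm ≤ sInf (condMI '' {Q : S × X₁ × X₂ → ℝ | memDeltaP P Q}) :=
        le_csInf (hDne.image _) (by rintro y ⟨Q, hQ, rfl⟩; exact hmin' Q hQ)
      rw [hUIdef] at hUI
      rw [hUI] at hle
      exact le_antisymm hle (condMI_nonneg_and Qm hQm.1 hQm.2.1).1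
    have hind := (condMI_nonneg_and Qm hQm.1 hQm.2.1).2 hQmval
    have hne : Nonempty (S × X₁ × X₂) := by
      by_contra h
      rw [not_nonempty_iff] at h
      rw [Finset.univ_eq_empty, Finset.sum_empty] at hPsum
      norm_num at hPsum
    haveI : Nonempty X₁ := hne.elim fun q => ⟨q.2.1⟩
    refine ⟨fun x₁ x₂ => if mA Qm x₂ = 0 then (Fintype.card X₁ : ℝ)⁻¹
      else mC Qm x₁ x₂ / mA Qm x₂, ⟨?_, ?_⟩, ?_⟩
    · intro x₁ x₂
      dsimp only
      split
      · positivity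
      · exact div_nonneg (mC_nonneg hQm.1) (mA_nonneg hQm.1)
    · intro x₂
      by_cases hA : mA Qm x₂ = 0
      · simp only [if_pos hA, Finset.sum_const, Finset.card_univ, nsmul_eq_mul]
        rw [mul_inv_cancel₀]
        exact_mod_cast Fintype.card_ne_zero
      · simp only [if_neg hA]
        rw [← Finset.sum_div, ← mA_eq_sum_mC, div_self hA]
    · intro x₁ s
      have hms : margS3 P s ≠ 0 := (hfull s).ne'
      have key : ∀ x₂, Qm (s, x₁, x₂)
          = (if mA Qm x₂ = 0 then (Fintype.card X₁ : ℝ)⁻¹ else mC Qm x₁ x₂ / mA Qm x₂)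
            * mB Qm s x₂ := by
        intro x₂
        by_cases hA : mA Qm x₂ = 0
        · have hB0 : mB Qm s x₂ = 0 := le_antisymm (hA ▸ mB_le_mA hQm.1) (mB_nonneg hQm.1)
          have hq0 : Qm (s, x₁, x₂) = 0 :=
            le_antisymm (hB0 ▸ le_mB hQm.1) (hQm.1 _)
          simp [hA, hB0, hq0]
        · rw [if_neg hA]
          have hA' : (0:ℝ) < mA Qm x₂ := (mA_nonneg hQm.1).lt_of_ne (Ne.symm hA)
          field_simp
          linear_combination (hind s x₁ x₂)
      calc chan1of3 P x₁ s = (∑ x₂, Qm (s, x₁, x₂)) / margS3 P s := by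
            rw [chan1of3, hQm.2.2.1 s x₁]
        _ = (∑ x₂, (if mA Qm x₂ = 0 then (Fintype.card X₁ : ℝ)⁻¹
              else mC Qm x₁ x₂ / mA Qm x₂) * mB Qm s x₂) / margS3 P s := by
            rw [Finset.sum_congr rfl fun x₂ _ => key x₂]
        _ = ∑ x₂, (if mA Qm x₂ = 0 then (Fintype.card X₁ : ℝ)⁻¹
              else mC Qm x₁ x₂ / mA Qm x₂) * chan2of3 P x₂ s := by
            rw [Finset.sum_div]
            refine Finset.sum_congr rfl fun x₂ _ => ?_
            rw [chan2of3, ← hQm.2.2.2 s x₂, mul_div_assoc]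
            rfl
  · rintro ⟨lam, ⟨hlnn, hlsum⟩, hgarb⟩
    set Q₀ : S × X₁ × X₂ → ℝ := fun q => lam q.2.1 q.2.2 * mB P q.1 q.2.2 with hQ₀def
    have hmarg2 : ∀ s x₂, ∑ x₁, Q₀ (s, x₁, x₂) = ∑ x₁, P (s, x₁, x₂) := by
      intro s x₂
      show ∑ x₁, lam x₁ x₂ * mB P s x₂ = ∑ x₁, P (s, x₁, x₂)
      rw [← Finset.sum_mul, hlsum x₂, one_mul]
      rfl
    have hmarg1 : ∀ s x₁, ∑ x₂, Q₀ (s, x₁, x₂) = ∑ x₂, P (s, x₁, x₂) := by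
      intro s x₁
      have hg := hgarb x₁ s
      rw [chan1of3] at hg
      have hms : margS3 P s ≠ 0 := (hfull s).ne'
      have h2 : ∑ x₂, lam x₁ x₂ * chan2of3 P x₂ s = (∑ x₂, Q₀ (s, x₁, x₂)) / margS3 P s := by
        rw [Finset.sum_div]
        refine Finset.sum_congr rfl fun x₂ _ => ?_
        show lam x₁ x₂ * chan2of3 P x₂ s = lam x₁ x₂ * mB P s x₂ / margS3 P s
        rw [chan2of3, mul_div_assoc]
        rfl
      rw [h2] at hg
      rw [div_eq_div_iff hms hms] at hg
      exact (mul_right_cancel₀ hms hg).symm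
    have hQ₀nn : ∀ q, 0 ≤ Q₀ q := fun q => mul_nonneg (hlnn _ _) (mB_nonneg hPnn)
    have hQ₀sum : ∑ q, Q₀ q = 1 := by
      rw [sum3, Finset.sum_congr rfl fun s _ => Finset.sum_congr rfl fun x₁ _ => hmarg1 s x₁,
        ← sum3, hPsum]
    have hmem : memDeltaP P Q₀ := ⟨hQ₀nn, hQ₀sum, hmarg1, hmarg2⟩
    have hind : ∀ s x₁ x₂, Q₀ (s, x₁, x₂) * mA Q₀ x₂ = mB Q₀ s x₂ * mC Q₀ x₁ x₂ := by
      intro s x₁ x₂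
      have hB' : mB Q₀ s x₂ = mB P s x₂ := hmarg2 s x₂
      have hC' : mC Q₀ x₁ x₂ = lam x₁ x₂ * mA P x₂ := by
        show ∑ s', lam x₁ x₂ * mB P s' x₂ = lam x₁ x₂ * mA P x₂
        rw [← Finset.mul_sum]
        rfl
      have hA' : mA Q₀ x₂ = mA P x₂ := by
        have h1 : mA Q₀ x₂ = ∑ s', mB P s' x₂ :=
          Finset.sum_congr rfl fun s' _ => hmarg2 s' x₂
        rw [h1]
        rfl
      show lam x₁ x₂ * mB P s x₂ * mA Q₀ x₂ = mB Q₀ s x₂ * mC Q₀ x₁ x₂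
      rw [hA', hB', hC']
      ring
    have hzero : condMI Q₀ = 0 := condMI_of_indep Q₀ hQ₀nn hind
    rw [hUIdef]
    refine le_antisymm ?_ ?_
    · exact csInf_le ⟨0, fun y hy => hlb y hy⟩ ⟨Q₀, hmem, hzero⟩
    · exact le_csInf ⟨condMI Q₀, ⟨Q₀, hmem, rfl⟩⟩ hlb
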